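/- Let K_φ be the Preconditioned Discrete-HAMS transition kernel on pairs (s,v) defined by: propose s* ∼ Q(s | z_t = s_t − v_{t+1/2}; s_t) ∝ exp(−½sᵀDs + (∇f(s_t) − Ws_t + (W+D)(s_t − v_{t+1/2}))ᵀs); set v* = −v_{t+1/2} + s_t − s* + φ(∇f(s*) − ∇f(s_t) + W(s_t − s*)); accept (s*, v*) with probability min{1, π(s*,−v*)Q_φ(s_t,−v_{t+1/2}|s*,−v*)/(π(s_t,v_{t+1/2})Q_φ(s*,v*|s_t,v_{t+1/2}))}, else move to (s_t, −v_{t+1/2}). Then K_φ satisfies the generalized detailed balance π(s,v)K_φ(s',v'|s,v) = π(s',−v')K_φ(s,−v|s',−v'), where π(s,v) ∝ exp(f(s) − ½vᵀ(W+D)v). -/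
import Mathlib


open Matrix
open scoped Classical

noncomputable section

/-- Proposal energy for the PDHAMS state proposal from (s, v): the auxiliary variable is
z = s − v and the energy of the proposed state sp is
−½spᵀDsp + (∇f(s) − Ws + (W+D)(s − v))ᵀsp. -/
def pdhamsE {d : ℕ} (W D : Matrix (Fin d) (Fin d) ℝ)
    (gradf : (Fin d → ℝ) → Fin d → ℝ) (s v sp : Fin d → ℝ) : ℝ :=
  -(1 / 2) * (sp ⬝ᵥ (D *ᵥ sp)) + (gradf s - W *ᵥ s + (W + D) *ᵥ (s - v)) ⬝ᵥ sp

/-- Normalized PDHAMS state proposal probability. -/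
def pdhamsQ {d : ℕ} (S : Finset (Fin d → ℝ)) (W D : Matrix (Fin d) (Fin d) ℝ)
    (gradf : (Fin d → ℝ) → Fin d → ℝ) (s v sp : Fin d → ℝ) : ℝ :=
  Real.exp (pdhamsE W D gradf s v sp) / ∑ s'' ∈ S, Real.exp (pdhamsE W D gradf s v s'')

/-- Momentum update with negation and gradient correction:
v* = −v + s − s* + φ(∇f(s*) − ∇f(s) + W(s − s*)). -/
def pdhamsVstar {d : ℕ} (W : Matrix (Fin d) (Fin d) ℝ)
    (gradf : (Fin d → ℝ) → Fin d → ℝ) (φ : ℝ) (s v sp : Fin d → ℝ) : Fin d → ℝ :=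
  -v + s - sp + φ • (gradf sp - gradf s + W *ᵥ (s - sp))

/-- Augmented (unnormalized) target π(s, v) ∝ exp(f(s) − ½ vᵀ(W+D)v). -/
def pdhamsPi {d : ℕ} (W D : Matrix (Fin d) (Fin d) ℝ)
    (f : (Fin d → ℝ) → ℝ) (s v : Fin d → ℝ) : ℝ :=
  Real.exp (f s - (1 / 2) * (v ⬝ᵥ ((W + D) *ᵥ v)))

/-- Generalized Metropolis–Hastings acceptance probability of PDHAMS. -/
def pdhamsAcc {d : ℕ} (S : Finset (Fin d → ℝ)) (W D : Matrix (Fin d) (Fin d) ℝ)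
    (f : (Fin d → ℝ) → ℝ) (gradf : (Fin d → ℝ) → Fin d → ℝ) (φ : ℝ)
    (s v sp : Fin d → ℝ) : ℝ :=
  min 1 (pdhamsPi W D f sp (-(pdhamsVstar W gradf φ s v sp)) *
      pdhamsQ S W D gradf sp (-(pdhamsVstar W gradf φ s v sp)) s /
    (pdhamsPi W D f s v * pdhamsQ S W D gradf s v sp))

/-- PDHAMS transition kernel on pairs (s, v): accept the proposal (s*, v*) with the
generalized acceptance probability, otherwise move to (s, −v). -/
def pdhamsK {d : ℕ} (S : Finset (Fin d → ℝ)) (W D : Matrix (Fin d) (Fin d) ℝ)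
    (f : (Fin d → ℝ) → ℝ) (gradf : (Fin d → ℝ) → Fin d → ℝ) (φ : ℝ)
    (s v sp vp : Fin d → ℝ) : ℝ :=
  (if sp ∈ S ∧ vp = pdhamsVstar W gradf φ s v sp then
      pdhamsQ S W D gradf s v sp * pdhamsAcc S W D f gradf φ s v sp
    else 0)
  + (if sp = s ∧ vp = -v then
      ∑ sst ∈ S, pdhamsQ S W D gradf s v sst * (1 - pdhamsAcc S W D f gradf φ s v sst)
    else 0)

lemma pdhams_invol {d : ℕ} (W : Matrix (Fin d) (Fin d) ℝ)
    (gradf : (Fin d → ℝ) → Fin d → ℝ) (φ : ℝ) (s v sp : Fin d → ℝ) :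
    pdhamsVstar W gradf φ sp (-(pdhamsVstar W gradf φ s v sp)) s = -v := by
  unfold pdhamsVstar
  rw [Matrix.mulVec_sub, Matrix.mulVec_sub]
  module

lemma pdhams_min_key (a b : ℝ) (ha : 0 < a) (hb : 0 < b) :
    a * min 1 (b / a) = b * min 1 (a / b) := by
  have h1 : a * min 1 (b / a) = min a b := by
    rw [mul_min_of_nonneg _ _ ha.le, mul_one, mul_comm a (b / a),
      div_mul_cancel₀ b ha.ne']
  have h2 : b * min 1 (a / b) = min b a := by
    rw [mul_min_of_nonneg _ _ hb.le, mul_one, mul_comm b (a / b),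
      div_mul_cancel₀ a hb.ne']
  rw [h1, h2, min_comm]

/-- The PDHAMS transition kernel K_φ satisfies generalized detailed balance:
π(s,v)K_φ(s',v'|s,v) = π(s',−v')K_φ(s,−v|s',−v'). -/
theorem stmt10 {d : ℕ} (S : Finset (Fin d → ℝ))
    (W D : Matrix (Fin d) (Fin d) ℝ)
    (hW : W.IsSymm) (hD : D.IsDiag) (hpos : (W + D).PosDef)
    (f : (Fin d → ℝ) → ℝ) (gradf : (Fin d → ℝ) → Fin d → ℝ)
    (φ : ℝ) (hφ : 0 ≤ φ) :
    ∀ s v sp vp : Fin d → ℝ, s ∈ S → sp ∈ S →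
      pdhamsPi W D f s v * pdhamsK S W D f gradf φ s v sp vp
        = pdhamsPi W D f sp (-vp) * pdhamsK S W D f gradf φ sp (-vp) s (-v) := by
  intro s v sp vp hs hsp
  have hne : S.Nonempty := ⟨s, hs⟩
  have hQpos : ∀ a b c : Fin d → ℝ, 0 < pdhamsQ S W D gradf a b c := by
    intro a b c
    exact div_pos (Real.exp_pos _)
      (Finset.sum_pos (fun x _ => Real.exp_pos _) hne)
  have hPipos : ∀ a b : Fin d → ℝ, 0 < pdhamsPi W D f a b :=
    fun a b => Real.exp_pos _
  unfold pdhamsK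
  rw [mul_add, mul_add]
  congr 1
  · -- acceptance terms
    by_cases h : vp = pdhamsVstar W gradf φ s v sp
    · have h' : -v = pdhamsVstar W gradf φ sp (-vp) s := by
        rw [h]; exact (pdhams_invol W gradf φ s v sp).symm
      rw [if_pos ⟨hsp, h⟩, if_pos ⟨hs, h'⟩]
      unfold pdhamsAcc
      rw [← h', neg_neg, ← h, ← mul_assoc, ← mul_assoc]
      exact pdhams_min_key _ _ (mul_pos (hPipos _ _) (hQpos _ _ _))
        (mul_pos (hPipos _ _) (hQpos _ _ _))
    · have h' : ¬(-v = pdhamsVstar W gradf φ sp (-vp) s) := by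
        intro hc
        have h2 := pdhams_invol W gradf φ sp (-vp) s
        rw [← hc, neg_neg, neg_neg] at h2
        exact h h2.symm
      rw [if_neg (fun hc => h hc.2), if_neg (fun hc => h' hc.2),
        mul_zero, mul_zero]
  · -- rejection terms
    by_cases h : sp = s ∧ vp = -v
    · obtain ⟨h1, h2⟩ := h
      subst h1; subst h2
      simp [neg_neg]
    · rw [if_neg h, if_neg, mul_zero, mul_zero]
      rintro ⟨ha, hb⟩
      rw [neg_neg] at hb
      exact h ⟨ha.symm, hb.symm⟩

end
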